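/- arXiv:2302.03420 — 3 statements merged into one kernel-verified Lean document; each statement's English description precedes it below -/
import Mathlib

section
/- For z₁, z₂ > 0 and integer n ≥ 2, ∫_0^∞ (log v) e^{-v} v^{2n-3}(1-e^{-vz₁})(1-e^{-vz₂}) dv = Γ(2n-2)·[ψ(2n-2)·(1-(1+z₁)^{2-2n}-(1+z₂)^{2-2n}+(1+z₁+z₂)^{2-2n}) + (1+z₁)^{2-2n}log(1+z₁) + (1+z₂)^{2-2n}log(1+z₂) - (1+z₁+z₂)^{2-2n}log(1+z₁+z₂)]. -/
open MeasureTheory Real Set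
open Filter Asymptotics

/-- The digamma function ψ = Γ'/Γ as the derivative of log ∘ Γ. -/
noncomputable def digamma (x : ℝ) : ℝ := deriv (fun y => Real.log (Real.Gamma y)) x


-- complex convergence of the log-Gamma integral
lemma aux_mellin (m : ℝ) (hm : 0 < m) :
    MellinConvergent (fun t : ℝ => Real.log t • (Real.exp (-t) : ℂ)) (m : ℂ) ∧
      HasDerivAt (mellin fun t : ℝ => (Real.exp (-t) : ℂ))
        (mellin (fun t : ℝ => Real.log t • (Real.exp (-t) : ℂ)) (m : ℂ)) (m : ℂ) := by
  have hs : 0 < (m : ℂ).re := by simpa using hm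
  refine mellin_hasDerivAt_of_isBigO_rpow (E := ℂ) ?_ ?_ (lt_add_one _) ?_ hs
  · refine (Continuous.continuousOn ?_).locallyIntegrableOn measurableSet_Ioi
    exact Complex.continuous_ofReal.comp (Real.continuous_exp.comp continuous_neg)
  · rw [← isBigO_norm_left]
    simp_rw [Complex.norm_real, isBigO_norm_left]
    simpa only [neg_one_mul] using (isLittleO_exp_neg_mul_rpow_atTop zero_lt_one _).isBigO
  · simp_rw [neg_zero, Real.rpow_zero]
    refine isBigO_const_of_tendsto (?_ : Tendsto _ _ (nhds (1 : ℂ))) one_ne_zero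
    rw [(by simp : (1 : ℂ) = Real.exp (-0))]
    exact (Complex.continuous_ofReal.comp
      (Real.continuous_exp.comp continuous_neg)).continuousWithinAt

lemma integrable_log_exp (m : ℝ) (hm : 0 < m) :
    IntegrableOn (fun t : ℝ => Real.log t * Real.exp (-t) * t ^ (m - 1)) (Ioi 0) := by
  have h := (aux_mellin m hm).1
  have h' : IntegrableOn
      (fun t : ℝ => (t : ℂ) ^ ((m : ℂ) - 1) • (Real.log t • (Real.exp (-t) : ℂ))) (Ioi 0) := h
  have h2 : IntegrableOn
      (fun t : ℝ => ((Real.log t * Real.exp (-t) * t ^ (m - 1) : ℝ) : ℂ)) (Ioi 0) := by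
    refine h'.congr_fun (fun t ht => ?_) measurableSet_Ioi
    rw [mem_Ioi] at ht
    beta_reduce
    rw [show ((m:ℂ) - 1) = ((m - 1 : ℝ) : ℂ) by push_cast; ring,
      ← Complex.ofReal_cpow ht.le]
    push_cast
    rw [smul_eq_mul, Complex.real_smul]
    push_cast
    ring
  have h3 := h2.re
  have : (fun t : ℝ => Real.log t * Real.exp (-t) * t ^ (m - 1))
      = fun t : ℝ => RCLike.re ((Real.log t * Real.exp (-t) * t ^ (m - 1) : ℝ) : ℂ) := by
    funext t; exact (Complex.ofReal_re _).symm
  rw [this]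
  exact h3

lemma hasDerivAt_realGamma (m : ℝ) (hm : 0 < m) :
    HasDerivAt Real.Gamma (∫ t in Ioi (0:ℝ), Real.log t * Real.exp (-t) * t ^ (m - 1)) m := by
  have hs : 0 < (m : ℂ).re := by simpa using hm
  have h1 : HasDerivAt Complex.GammaIntegral
      (∫ t : ℝ in Ioi 0, (t : ℂ) ^ ((m : ℂ) - 1) * (Real.log t * Real.exp (-t))) (m : ℂ) :=
    Complex.hasDerivAt_GammaIntegral hs
  have h2 : HasDerivAt Complex.Gamma
      (∫ t : ℝ in Ioi 0, (t : ℂ) ^ ((m : ℂ) - 1) * (Real.log t * Real.exp (-t))) (m : ℂ) := by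
    refine h1.congr_of_eventuallyEq ?_
    have hopen : {z : ℂ | 0 < z.re} ∈ nhds (m : ℂ) := by
      exact (isOpen_lt continuous_const Complex.continuous_re).mem_nhds hs
    filter_upwards [hopen] with z hz
    exact Complex.Gamma_eq_integral hz
  have hD : (∫ t : ℝ in Ioi 0, (t : ℂ) ^ ((m : ℂ) - 1) * (Real.log t * Real.exp (-t)))
      = ((∫ t in Ioi (0:ℝ), Real.log t * Real.exp (-t) * t ^ (m - 1) : ℝ) : ℂ) := by
    refine Eq.trans (setIntegral_congr_fun measurableSet_Ioi (fun t ht => ?_))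
      (integral_ofReal (𝕜 := ℂ))
    rw [mem_Ioi] at ht
    rw [show ((m:ℂ) - 1) = ((m - 1 : ℝ) : ℂ) by push_cast; ring, ← Complex.ofReal_cpow ht.le]
    rw [← Complex.ofReal_mul, ← Complex.ofReal_mul]
    exact Complex.ofReal_inj.mpr (by rw [Algebra.algebraMap_self_apply]; ring)
  rw [hD] at h2
  have h3 := h2.real_of_complex
  simpa [Complex.ofReal_re, Complex.Gamma_ofReal] using h3

lemma gamma_mul_digamma (m : ℝ) (hm : 0 < m) :
    ∫ t in Ioi (0:ℝ), Real.log t * Real.exp (-t) * t ^ (m - 1)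
      = Real.Gamma m * digamma m := by
  have hΓ : (0:ℝ) < Real.Gamma m := Real.Gamma_pos_of_pos hm
  have h1 := hasDerivAt_realGamma m hm
  have h2 : HasDerivAt (fun y => Real.log (Real.Gamma y))
      ((∫ t in Ioi (0:ℝ), Real.log t * Real.exp (-t) * t ^ (m - 1)) / Real.Gamma m) m :=
    h1.log hΓ.ne'
  have h3 : digamma m
      = (∫ t in Ioi (0:ℝ), Real.log t * Real.exp (-t) * t ^ (m - 1)) / Real.Gamma m := h2.deriv
  rw [h3]
  field_simp

lemma integrable_exp_rpow (m c : ℝ) (hm : 0 < m) (hc : 0 < c) :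
    IntegrableOn (fun v : ℝ => Real.exp (-(c * v)) * v ^ (m - 1)) (Ioi 0) := by
  have h0 : IntegrableOn (fun x : ℝ => Real.exp (-x) * x ^ (m - 1)) (Ioi 0) :=
    Real.GammaIntegral_convergent hm
  have h1 : IntegrableOn (fun v : ℝ => Real.exp (-(c * v)) * (c * v) ^ (m - 1)) (Ioi 0) := by
    have := (integrableOn_Ioi_comp_mul_left_iff
      (fun x : ℝ => Real.exp (-x) * x ^ (m - 1)) 0 hc).mpr
    simpa using this (by simpa using h0)
  have h2 : IntegrableOn
      (fun v : ℝ => (c ^ (m - 1))⁻¹ * (Real.exp (-(c * v)) * (c * v) ^ (m - 1))) (Ioi 0) :=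
    h1.const_mul (c ^ (m - 1))⁻¹
  refine h2.congr_fun (fun v hv => ?_) measurableSet_Ioi
  rw [mem_Ioi] at hv
  beta_reduce
  rw [Real.mul_rpow hc.le hv.le]
  field_simp [(Real.rpow_pos_of_pos hc (m-1)).ne']

lemma integrable_log_exp_mul (m c : ℝ) (hm : 0 < m) (hc : 0 < c) :
    IntegrableOn (fun v : ℝ => Real.log v * Real.exp (-(c * v)) * v ^ (m - 1)) (Ioi 0) := by
  have h0 := integrable_log_exp m hm
  have h1 : IntegrableOn
      (fun v : ℝ => Real.log (c * v) * Real.exp (-(c * v)) * (c * v) ^ (m - 1)) (Ioi 0) := by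
    have := (integrableOn_Ioi_comp_mul_left_iff
      (fun x : ℝ => Real.log x * Real.exp (-x) * x ^ (m - 1)) 0 hc).mpr
    simpa using this (by simpa using h0)
  have h2 : IntegrableOn (fun v : ℝ =>
      (c ^ (m - 1))⁻¹ * (Real.log (c * v) * Real.exp (-(c * v)) * (c * v) ^ (m - 1))
        - Real.log c * (Real.exp (-(c * v)) * v ^ (m - 1))) (Ioi 0) :=
    (h1.const_mul (c ^ (m - 1))⁻¹).sub
      ((integrable_exp_rpow m c hm hc).const_mul (Real.log c))
  refine h2.congr_fun (fun v hv => ?_) measurableSet_Ioi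
  rw [mem_Ioi] at hv
  beta_reduce
  rw [Real.mul_rpow hc.le hv.le, Real.log_mul hc.ne' hv.ne']
  field_simp [(Real.rpow_pos_of_pos hc (m-1)).ne']
  ring

lemma F_eval (m c : ℝ) (hm : 0 < m) (hc : 0 < c) :
    ∫ v in Ioi (0:ℝ), Real.log v * Real.exp (-(c * v)) * v ^ (m - 1)
      = c ^ (-m) * (Real.Gamma m * (digamma m - Real.log c)) := by
  have hG := gamma_mul_digamma m hm
  have key := integral_comp_mul_left_Ioi
    (fun u : ℝ => Real.log u * Real.exp (-u) * u ^ (m - 1)) 0 hc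
  rw [mul_zero, smul_eq_mul, hG] at key
  have hI₁ : ∫ v in Ioi (0:ℝ), Real.exp (-(c * v)) * v ^ (m - 1)
      = c ^ (-m) * Real.Gamma m := by
    rw [show c ^ (-m) = (1/c) ^ m by
        rw [one_div, Real.inv_rpow hc.le, ← Real.rpow_neg hc.le]]
    rw [← Real.integral_rpow_mul_exp_neg_mul_Ioi hm hc]
    exact setIntegral_congr_fun measurableSet_Ioi (fun v hv => by ring)
  have expand : EqOn
      (fun v : ℝ => Real.log (c * v) * Real.exp (-(c * v)) * (c * v) ^ (m - 1))
      (fun v : ℝ => (c ^ (m - 1) * Real.log c) * (Real.exp (-(c * v)) * v ^ (m - 1))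
          + c ^ (m - 1) * (Real.log v * Real.exp (-(c * v)) * v ^ (m - 1))) (Ioi 0) := by
    intro v hv
    rw [mem_Ioi] at hv
    simp only
    rw [Real.mul_rpow hc.le hv.le, Real.log_mul hc.ne' hv.ne']
    ring
  rw [setIntegral_congr_fun measurableSet_Ioi expand,
    integral_add ((integrable_exp_rpow m c hm hc).const_mul _)
      ((integrable_log_exp_mul m c hm hc).const_mul _),
    integral_const_mul, integral_const_mul, hI₁] at key
  have hX : (0:ℝ) < c ^ (m - 1) := Real.rpow_pos_of_pos hc _
  have e2 : c ^ (m - 1) * c ^ (-m) = c⁻¹ := by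
    rw [← Real.rpow_add hc, show m - 1 + -m = -1 by ring, Real.rpow_neg_one]
  have hmain : c ^ (m - 1) * (∫ v in Ioi (0:ℝ), Real.log v * Real.exp (-(c * v)) * v ^ (m - 1))
      = c ^ (m - 1) * (c ^ (-m) * (Real.Gamma m * (digamma m - Real.log c))) := by
    linear_combination key - Real.Gamma m * digamma m * e2
  exact mul_left_cancel₀ hX.ne' hmain

/-- Explicit value of ∫₀^∞ (log v) e^{-v} v^{2n-3}(1-e^{-vz₁})(1-e^{-vz₂}) dv. -/
theorem stmt_13 (z₁ z₂ : ℝ) (hz₁ : 0 < z₁) (hz₂ : 0 < z₂) (n : ℕ) (hn : 2 ≤ n) :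
    ∫ v in Ioi (0:ℝ),
        Real.log v * (Real.exp (-v) * v ^ ((2:ℝ) * n - 3)
          * (1 - Real.exp (-(v * z₁))) * (1 - Real.exp (-(v * z₂))))
      = Real.Gamma ((2:ℝ) * n - 2) *
          (digamma ((2:ℝ) * n - 2) *
              (1 - (1 + z₁) ^ ((2:ℝ) - 2 * n) - (1 + z₂) ^ ((2:ℝ) - 2 * n)
                + (1 + z₁ + z₂) ^ ((2:ℝ) - 2 * n))
            + (1 + z₁) ^ ((2:ℝ) - 2 * n) * Real.log (1 + z₁)
            + (1 + z₂) ^ ((2:ℝ) - 2 * n) * Real.log (1 + z₂)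
            - (1 + z₁ + z₂) ^ ((2:ℝ) - 2 * n) * Real.log (1 + z₁ + z₂)) := by
  have hn2 : (2:ℝ) ≤ (n:ℝ) := by exact_mod_cast hn
  set m : ℝ := (2:ℝ) * n - 2 with hmdef
  have hm : 0 < m := by simp only [hmdef]; linarith
  have hpt : Set.EqOn
      (fun v : ℝ => Real.log v * (Real.exp (-v) * v ^ ((2:ℝ) * n - 3)
          * (1 - Real.exp (-(v * z₁))) * (1 - Real.exp (-(v * z₂)))))
      (fun v : ℝ => Real.log v * Real.exp (-((1:ℝ) * v)) * v ^ (m - 1)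
          - Real.log v * Real.exp (-((1 + z₁) * v)) * v ^ (m - 1)
          - Real.log v * Real.exp (-((1 + z₂) * v)) * v ^ (m - 1)
          + Real.log v * Real.exp (-((1 + z₁ + z₂) * v)) * v ^ (m - 1)) (Ioi 0) := by
    intro v _
    simp only
    rw [show (2:ℝ) * n - 3 = m - 1 by rw [hmdef]; ring]
    rw [show Real.exp (-((1:ℝ) * v)) = Real.exp (-v) by norm_num,
      show Real.exp (-((1 + z₁) * v)) = Real.exp (-v) * Real.exp (-(v * z₁)) by
        rw [← Real.exp_add]; congr 1; ring,
      show Real.exp (-((1 + z₂) * v)) = Real.exp (-v) * Real.exp (-(v * z₂)) by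
        rw [← Real.exp_add]; congr 1; ring,
      show Real.exp (-((1 + z₁ + z₂) * v))
          = Real.exp (-v) * Real.exp (-(v * z₁)) * Real.exp (-(v * z₂)) by
        rw [← Real.exp_add, ← Real.exp_add]; congr 1; ring]
    ring
  rw [setIntegral_congr_fun measurableSet_Ioi hpt]
  have i1 := integrable_log_exp_mul m 1 hm one_pos
  have i2 := integrable_log_exp_mul m (1 + z₁) hm (by linarith)
  have i3 := integrable_log_exp_mul m (1 + z₂) hm (by linarith)
  have i4 := integrable_log_exp_mul m (1 + z₁ + z₂) hm (by linarith)
  have i12 : IntegrableOn (fun v : ℝ => Real.log v * Real.exp (-((1:ℝ) * v)) * v ^ (m - 1)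
      - Real.log v * Real.exp (-((1 + z₁) * v)) * v ^ (m - 1)) (Ioi 0) := i1.sub i2
  have i123 : IntegrableOn (fun v : ℝ => Real.log v * Real.exp (-((1:ℝ) * v)) * v ^ (m - 1)
      - Real.log v * Real.exp (-((1 + z₁) * v)) * v ^ (m - 1)
      - Real.log v * Real.exp (-((1 + z₂) * v)) * v ^ (m - 1)) (Ioi 0) := i12.sub i3
  rw [integral_add i123 i4, integral_sub i12 i3, integral_sub i1 i2,
    F_eval m 1 hm one_pos, F_eval m (1 + z₁) hm (by linarith),
    F_eval m (1 + z₂) hm (by linarith), F_eval m (1 + z₁ + z₂) hm (by linarith)]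
  rw [show (2:ℝ) - 2 * n = -m by rw [hmdef]; ring]
  rw [Real.one_rpow, Real.log_one]
  ring
end

section
/- For 0 < d₁ < d₂ and parameters N > 0, r > 0, the ratio y ↦ [e^{(y-d₂)N} exp(-e^{y-d₂})(1 - e^{-r e^{y-d₂}})] / [e^{(y-d₁)N} exp(-e^{y-d₁})(1 - e^{-r e^{y-d₁}})] is strictly increasing in y on ℝ. -/
open Real

lemma slope_aux (a b : ℝ) (ha : 0 < a) (hab : a ≤ b) :
    b * (Real.exp a - 1) ≤ a * (Real.exp b - 1) := by
  have hb : 0 < b := lt_of_lt_of_le ha hab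
  have hl0 : (0:ℝ) ≤ a / b := by positivity
  have hl1 : a / b ≤ 1 := (div_le_one hb).2 hab
  have h := convexOn_exp.2 (Set.mem_univ b) (Set.mem_univ (0:ℝ)) hl0
    (show (0:ℝ) ≤ 1 - a / b by linarith) (by ring)
  simp only [smul_eq_mul, mul_zero, add_zero, Real.exp_zero, mul_one] at h
  have ha' : a / b * b = a := div_mul_cancel₀ a hb.ne'
  rw [ha'] at h
  have h2 : Real.exp a - 1 ≤ a / b * (Real.exp b - 1) := by ring_nf; ring_nf at h; linarith
  calc b * (Real.exp a - 1) ≤ b * (a / b * (Real.exp b - 1)) :=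
        mul_le_mul_of_nonneg_left h2 hb.le
    _ = a * (Real.exp b - 1) := by field_simp

-- key derivative numerator inequality
lemma num_ineq (c r u : ℝ) (hc : 0 < c) (hcr : c ≤ r) (hu : 0 < u) :
    (1 - Real.exp (-(c * u))) * (r * Real.exp (-(r * u)))
      ≤ c * Real.exp (-(c * u)) * (1 - Real.exp (-(r * u))) := by
  have h := slope_aux (c * u) (r * u) (by positivity)
    (mul_le_mul_of_nonneg_right hcr hu.le)
  have hs : (0:ℝ) ≤ Real.exp (-(c*u)) * Real.exp (-(r*u)) := by positivity
  have h2 := mul_le_mul_of_nonneg_right h hs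
  have e1 : Real.exp (c*u) * (Real.exp (-(c*u)) * Real.exp (-(r*u))) = Real.exp (-(r*u)) := by
    rw [← Real.exp_add, ← Real.exp_add]; ring_nf
  have e2 : Real.exp (r*u) * (Real.exp (-(c*u)) * Real.exp (-(r*u))) = Real.exp (-(c*u)) := by
    rw [← Real.exp_add, ← Real.exp_add]; ring_nf
  have l1 : r*u*(Real.exp (-(r*u)) - Real.exp (-(c*u))*Real.exp (-(r*u)))
      = r*u*(Real.exp (c*u)-1)*(Real.exp (-(c*u))*Real.exp (-(r*u))) := by linear_combination (-(r*u)) * e1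
  have l2 : c*u*(Real.exp (-(c*u)) - Real.exp (-(c*u))*Real.exp (-(r*u)))
      = c*u*(Real.exp (r*u)-1)*(Real.exp (-(c*u))*Real.exp (-(r*u))) := by linear_combination (-(c*u)) * e2
  have key : r*u*(Real.exp (-(r*u)) - Real.exp (-(c*u))*Real.exp (-(r*u)))
      ≤ c*u*(Real.exp (-(c*u)) - Real.exp (-(c*u))*Real.exp (-(r*u))) := by
    rw [l1, l2]; exact h2
  have key' : u * ((1 - Real.exp (-(c*u))) * (r * Real.exp (-(r*u))))
      ≤ u * (c * Real.exp (-(c*u)) * (1 - Real.exp (-(r*u)))) := by linarith [key]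
  exact le_of_mul_le_mul_left key' hu

lemma ratio_mono (c r : ℝ) (hc : 0 < c) (hcr : c ≤ r) :
    MonotoneOn (fun u : ℝ => (1 - Real.exp (-(c * u))) / (1 - Real.exp (-(r * u))))
      (Set.Ioi (0:ℝ)) := by
  have hr : 0 < r := lt_of_lt_of_le hc hcr
  have hden : ∀ u ∈ Set.Ioi (0:ℝ), (1:ℝ) - Real.exp (-(r*u)) ≠ 0 := by
    intro u hu
    have : Real.exp (-(r*u)) < 1 := Real.exp_lt_one_iff.2 (by simp at hu; nlinarith)
    linarith
  have hd : ∀ u ∈ Set.Ioi (0:ℝ), HasDerivAt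
      (fun u : ℝ => (1 - Real.exp (-(c * u))) / (1 - Real.exp (-(r * u))))
      ((c * Real.exp (-(c*u)) * (1 - Real.exp (-(r*u)))
        - (1 - Real.exp (-(c*u))) * (r * Real.exp (-(r*u)))) / (1 - Real.exp (-(r*u)))^2) u := by
    intro u hu
    have h1 : HasDerivAt (fun u : ℝ => -(c*u)) (-c) u := by
      simpa [Pi.neg_def] using ((hasDerivAt_id u).const_mul c).neg
    have h2 : HasDerivAt (fun u : ℝ => 1 - Real.exp (-(c*u))) (c * Real.exp (-(c*u))) u := by
      simpa [mul_comm] using (h1.exp.const_sub 1)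
    have h3 : HasDerivAt (fun u : ℝ => -(r*u)) (-r) u := by
      simpa [Pi.neg_def] using ((hasDerivAt_id u).const_mul r).neg
    have h4 : HasDerivAt (fun u : ℝ => 1 - Real.exp (-(r*u))) (r * Real.exp (-(r*u))) u := by
      simpa [mul_comm] using (h3.exp.const_sub 1)
    exact h2.div h4 (hden u hu)
  apply monotoneOn_of_deriv_nonneg (convex_Ioi 0)
  · exact ContinuousOn.div (by fun_prop) (by fun_prop) hden
  · intro u hu
    rw [interior_Ioi] at hu
    exact (hd u hu).differentiableAt.differentiableWithinAt
  · intro u hu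
    rw [interior_Ioi] at hu
    rw [(hd u hu).deriv]
    apply div_nonneg _ (sq_nonneg _)
    have := num_ineq c r u hc hcr hu
    linarith

lemma key_aux (r s u K W : ℝ) (hW : W ≠ 0) (hexp : Real.exp (-u) ≠ 0)
    (hne : (1:ℝ) - Real.exp (-(r*u)) ≠ 0) :
    (K * W * Real.exp (-(s*u)) * (1 - Real.exp (-(r*(s*u))))) /
      (W * Real.exp (-u) * (1 - Real.exp (-(r*u))))
    = K * (Real.exp ((1-s)*u) * ((1 - Real.exp (-(r*s*u))) / (1 - Real.exp (-(r*u))))) := by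
  have he : Real.exp (-(s*u)) = Real.exp ((1-s)*u) * Real.exp (-u) := by
    rw [← Real.exp_add]; congr 1; ring
  rw [show r*(s*u) = r*s*u by ring, he]
  field_simp

/-- For 0 < d₁ < d₂, N > 0, r > 0, the ratio
y ↦ Λ(y-d₂)/Λ(y-d₁) with Λ(t) = e^{tN} exp(-e^t)(1-e^{-r e^t})
is strictly increasing in y. -/
theorem stmt_15 (N r d₁ d₂ : ℝ) (hN : 0 < N) (hr : 0 < r) (hd₁ : 0 < d₁) (hd : d₁ < d₂) :
    StrictMono (fun y : ℝ =>
      (Real.exp ((y - d₂) * N) * Real.exp (-Real.exp (y - d₂))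
          * (1 - Real.exp (-(r * Real.exp (y - d₂))))) /
        (Real.exp ((y - d₁) * N) * Real.exp (-Real.exp (y - d₁))
          * (1 - Real.exp (-(r * Real.exp (y - d₁)))))) := by
  have hs0 : 0 < Real.exp (d₁ - d₂) := Real.exp_pos _
  have hs1 : Real.exp (d₁ - d₂) < 1 := Real.exp_lt_one_iff.2 (by linarith)
  have hE : ∀ z : ℝ, Real.exp (z - d₂) = Real.exp (d₁ - d₂) * Real.exp (z - d₁) := by
    intro z; rw [← Real.exp_add]; congr 1; ring
  have hEN : ∀ z : ℝ, Real.exp ((z - d₂) * N)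
      = Real.exp ((d₁ - d₂) * N) * Real.exp ((z - d₁) * N) := by
    intro z; rw [← Real.exp_add]; congr 1; ring
  have hden : ∀ v : ℝ, 0 < v → (0:ℝ) < 1 - Real.exp (-(r * v)) := by
    intro v hv
    have : Real.exp (-(r*v)) < 1 := Real.exp_lt_one_iff.2 (by nlinarith)
    linarith
  have key : ∀ z : ℝ,
      (Real.exp ((z - d₂) * N) * Real.exp (-Real.exp (z - d₂))
          * (1 - Real.exp (-(r * Real.exp (z - d₂))))) /
        (Real.exp ((z - d₁) * N) * Real.exp (-Real.exp (z - d₁))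
          * (1 - Real.exp (-(r * Real.exp (z - d₁)))))
      = Real.exp ((d₁ - d₂) * N) *
          (Real.exp ((1 - Real.exp (d₁ - d₂)) * Real.exp (z - d₁)) *
            ((1 - Real.exp (-(r * Real.exp (d₁ - d₂) * Real.exp (z - d₁))))
              / (1 - Real.exp (-(r * Real.exp (z - d₁)))))) := by
    intro z
    have hu : 0 < Real.exp (z - d₁) := Real.exp_pos _
    rw [hE z, hEN z]
    exact key_aux r (Real.exp (d₁ - d₂)) (Real.exp (z - d₁)) _ _
      (Real.exp_pos _).ne' (Real.exp_pos _).ne' (hden _ hu).ne'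
  intro x y hxy
  dsimp only
  rw [key x, key y]
  have hux : Real.exp (x - d₁) < Real.exp (y - d₁) := Real.exp_lt_exp.2 (by linarith)
  have huxp : Real.exp (x - d₁) ∈ Set.Ioi (0:ℝ) := Real.exp_pos _
  have huyp : Real.exp (y - d₁) ∈ Set.Ioi (0:ℝ) := Real.exp_pos _
  have hq := ratio_mono (r * Real.exp (d₁ - d₂)) r (by positivity) (by nlinarith)
    huxp huyp hux.le
  have hqpos : 0 < (1 - Real.exp (-(r * Real.exp (d₁ - d₂) * Real.exp (y - d₁))))
      / (1 - Real.exp (-(r * Real.exp (y - d₁)))) := by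
    apply div_pos _ (hden _ (Real.exp_pos _))
    have h1 : (0:ℝ) < Real.exp (d₁ - d₂) * Real.exp (y - d₁) := by positivity
    have h2 := hden (Real.exp (d₁ - d₂) * Real.exp (y - d₁)) h1
    rw [show r * (Real.exp (d₁ - d₂) * Real.exp (y - d₁))
        = r * Real.exp (d₁ - d₂) * Real.exp (y - d₁) by ring] at h2
    exact h2
  have hA : Real.exp ((1 - Real.exp (d₁ - d₂)) * Real.exp (x - d₁))
      < Real.exp ((1 - Real.exp (d₁ - d₂)) * Real.exp (y - d₁)) :=
    Real.exp_lt_exp.2 (by nlinarith)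
  apply mul_lt_mul_of_pos_left _ (Real.exp_pos _)
  calc Real.exp ((1 - Real.exp (d₁ - d₂)) * Real.exp (x - d₁)) *
        ((1 - Real.exp (-(r * Real.exp (d₁ - d₂) * Real.exp (x - d₁))))
          / (1 - Real.exp (-(r * Real.exp (x - d₁)))))
      ≤ Real.exp ((1 - Real.exp (d₁ - d₂)) * Real.exp (x - d₁)) *
        ((1 - Real.exp (-(r * Real.exp (d₁ - d₂) * Real.exp (y - d₁))))
          / (1 - Real.exp (-(r * Real.exp (y - d₁))))) := by
        apply mul_le_mul_of_nonneg_left _ (Real.exp_pos _).le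
        simpa using hq
    _ < _ := mul_lt_mul_of_pos_right hA hqpos
end

section
/- For fixed 0 < s < 1 and r > 0, the function v ↦ (1 - e^{-r s v})/(1 - e^{-r v}) is nondecreasing in v on (0, ∞). -/
open Real Set

lemma key_ineq (s t : ℝ) (hs0 : 0 < s) (hs1 : s < 1) (ht : 0 < t) :
    Real.exp (-t) ≤ s * Real.exp (-(s*t)) + (1-s) * Real.exp (-((1+s)*t)) := by
  have h := convexOn_exp.2 (Set.mem_univ (-(s*t))) (Set.mem_univ (-((1+s)*t)))
    hs0.le (by linarith : (0:ℝ) ≤ 1 - s) (by ring)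
  have e : s • (-(s*t)) + (1-s) • (-((1+s)*t)) = -t := by simp [smul_eq_mul]; ring
  rw [e] at h
  simpa [smul_eq_mul] using h

/-- For 0 < s < 1 and r > 0, v ↦ (1-e^{-rsv})/(1-e^{-rv}) is nondecreasing on (0,∞). -/
theorem stmt_16 (s r : ℝ) (hs0 : 0 < s) (hs1 : s < 1) (hr : 0 < r) :
    MonotoneOn (fun v : ℝ =>
      (1 - Real.exp (-(r * s * v))) / (1 - Real.exp (-(r * v)))) (Ioi (0:ℝ)) := by
  have hden : ∀ v ∈ Ioi (0:ℝ), (1 - Real.exp (-(r * v))) ≠ 0 := by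
    intro v hv
    have : Real.exp (-(r * v)) < 1 := by
      rw [Real.exp_lt_one_iff]
      have := mul_pos hr hv
      linarith
    linarith
  have hderiv : ∀ v ∈ Ioi (0:ℝ), HasDerivAt (fun v : ℝ =>
      (1 - Real.exp (-(r * s * v))) / (1 - Real.exp (-(r * v))))
      ((r*s*Real.exp (-(r*s*v)) * (1 - Real.exp (-(r*v)))
        - (1 - Real.exp (-(r*s*v))) * (r*Real.exp (-(r*v)))) / (1 - Real.exp (-(r*v)))^2) v := by
    intro v hv
    have hg : HasDerivAt (fun v:ℝ => 1 - Real.exp (-(r*s*v))) (r*s*Real.exp (-(r*s*v))) v := by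
      have h1 : HasDerivAt (fun v:ℝ => -(r*s*v)) (-(r*s)) v := by
        exact (((hasDerivAt_id v).const_mul (r*s)).neg).congr_deriv (by ring)
      have := (h1.exp).const_sub 1
      refine this.congr_deriv ?_
      ring
    have hh : HasDerivAt (fun v:ℝ => 1 - Real.exp (-(r*v))) (r*Real.exp (-(r*v))) v := by
      have h1 : HasDerivAt (fun v:ℝ => -(r*v)) (-r) v := by
        exact (((hasDerivAt_id v).const_mul r).neg).congr_deriv (by ring)
      have := (h1.exp).const_sub 1
      refine this.congr_deriv ?_
      ring
    exact hg.div hh (hden v hv)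
  apply monotoneOn_of_deriv_nonneg (convex_Ioi 0)
  · exact ContinuousOn.div
      (Continuous.continuousOn (by fun_prop)) (Continuous.continuousOn (by fun_prop)) hden
  · intro v hv
    rw [interior_Ioi] at hv
    exact ((hderiv v hv).differentiableAt).differentiableWithinAt
  · intro v hv
    rw [interior_Ioi] at hv
    rw [(hderiv v hv).deriv]
    apply div_nonneg _ (sq_nonneg _)
    have hkey := key_ineq s (r*v) hs0 hs1 (mul_pos hr hv)
    have hnum : r * Real.exp (-(r*v)) ≤ r * (s * Real.exp (-(s*(r*v))) + (1-s) * Real.exp (-((1+s)*(r*v)))) :=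
      mul_le_mul_of_nonneg_left hkey hr.le
    have e1 : Real.exp (-(r*s*v)) * Real.exp (-(r*v)) = Real.exp (-((1+s)*(r*v))) := by
      rw [← Real.exp_add]; ring_nf
    have e2 : (-(r*s*v)) = -(s*(r*v)) := by ring
    rw [← e2, ← e1] at hnum
    nlinarith [hnum]
end
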